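/- Let B, D be Banach spaces as above with {U^{t,r}_n}, {U^{t,r}} backward propagators generated by {A^n_t}, {A_t} on the invariant domain D, all uniformly bounded on B and D. If for each t and each f ∈ D one has A^n_t f → A_t f in the norm of B as n → ∞, and sup_n sup_t ‖A^n_t‖_{D→B} < ∞, then U^{t,r}_n f → U^{t,r} f in B for every f ∈ B (strong convergence on all of B), provided D is dense in B. -/

import Mathlib

open Filter Set MeasureTheory

/-- If a family of operators is eventually uniformly bounded, the vectors `w x` converge to
`w₀`, and `T x w₀` converges to `S`, then `T x (w x)` converges to `S`. -/
lemma tendsto_apply_aux' {B : Type*} [NormedAddCommGroup B] [NormedSpace ℝ B]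
    {X : Type*} {l : Filter X} {T : X → B →L[ℝ] B} {w : X → B} {w₀ S : B} {C : ℝ}
    (hT : ∀ᶠ x in l, ‖T x‖ ≤ C) (hw : Tendsto w l (nhds w₀))
    (hTw : Tendsto (fun x => T x w₀) l (nhds S)) :
    Tendsto (fun x => T x (w x)) l (nhds S) := by
  have h0 : Tendsto (fun x => T x (w x) - T x w₀) l (nhds 0) := by
    apply squeeze_zero_norm' (a := fun x => C * ‖w x - w₀‖)
    · filter_upwards [hT] with x hx
      rw [← map_sub]
      exact le_trans ((T x).le_opNorm _) (mul_le_mul_of_nonneg_right hx (norm_nonneg _))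
    · have hw0 : Tendsto (fun x => ‖w x - w₀‖) l (nhds 0) := by
        rw [← tendsto_zero_iff_norm_tendsto_zero]
        simpa using hw.sub (tendsto_const_nhds (x := w₀))
      simpa using hw0.const_mul C
  have := h0.add hTw
  simpa using this

/-- Convergence of uniformly bounded operators on a dense range extends to all vectors. -/
lemma tendsto_dense_aux' {D B : Type*} [NormedAddCommGroup D] [NormedSpace ℝ D]
    [NormedAddCommGroup B] [NormedSpace ℝ B]
    (ι : D →L[ℝ] B) (hdense : DenseRange ι) {X : Type*} {l : Filter X}
    {T : X → B →L[ℝ] B} {S : B →L[ℝ] B} {C : ℝ}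
    (hT : ∀ᶠ x in l, ‖T x‖ ≤ C) (hS : ‖S‖ ≤ C)
    (h : ∀ g : D, Tendsto (fun x => T x (ι g)) l (nhds (S (ι g))))
    (f : B) : Tendsto (fun x => T x f) l (nhds (S f)) := by
  rw [Metric.tendsto_nhds]
  intro ε hε
  set C' := max C 0 with hC'
  have hC0 : 0 ≤ C' := le_max_right _ _
  have hCC : C ≤ C' := le_max_left _ _
  have hK : (0:ℝ) < C' + 1 := by linarith
  obtain ⟨g, hg⟩ := hdense.exists_dist_lt f (show (0:ℝ) < ε / (3 * (C' + 1)) by positivity)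
  have hgmain := Metric.tendsto_nhds.mp (h g) (ε / 3) (by positivity)
  filter_upwards [hT, hgmain] with x hx hgx
  have hprod : C' * dist f (ι g) < ε / 3 := by
    calc C' * dist f (ι g) ≤ (C' + 1) * dist f (ι g) := by
          nlinarith [dist_nonneg (x := f) (y := ι g)]
      _ < (C' + 1) * (ε / (3 * (C' + 1))) := mul_lt_mul_of_pos_left hg hK
      _ = ε / 3 := by field_simp
  have h1 : dist (T x f) (T x (ι g)) ≤ C' * dist f (ι g) := by
    rw [dist_eq_norm, ← map_sub]
    calc ‖T x (f - ι g)‖ ≤ ‖T x‖ * ‖f - ι g‖ := (T x).le_opNorm _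
      _ ≤ C' * dist f (ι g) := by
          rw [dist_eq_norm]
          exact mul_le_mul_of_nonneg_right (hx.trans hCC) (norm_nonneg _)
  have h3 : dist (S (ι g)) (S f) ≤ C' * dist f (ι g) := by
    rw [dist_eq_norm, ← map_sub]
    calc ‖S (ι g - f)‖ ≤ ‖S‖ * ‖ι g - f‖ := S.le_opNorm _
      _ ≤ C' * dist f (ι g) := by
          rw [dist_eq_norm, norm_sub_rev]
          exact mul_le_mul_of_nonneg_right (hS.trans hCC) (norm_nonneg _)
  have htri := dist_triangle4 (T x f) (T x (ι g)) (S (ι g)) (S f)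
  linarith

/-- if the generators `A^n_t f → A_t f` in `B` for each `f ∈ D`,
with a uniform bound on `‖A^n_t‖_{D→B}`, and `D` is dense in `B`, then the
propagators converge strongly on all of `B`: `U_n^{t,r} f → U^{t,r} f`. -/
theorem propagators_converge_strongly_of_generators_converge
    {D B : Type*} [NormedAddCommGroup D] [NormedSpace ℝ D]
    [NormedAddCommGroup B] [NormedSpace ℝ B] [CompleteSpace B]
    (ι : D →L[ℝ] B) (hιinj : Function.Injective ι) (hιnorm : ∀ f : D, ‖ι f‖ ≤ ‖f‖)
    (C : ℝ) (hC : 0 ≤ C)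
    (Un : ℕ → ℝ → ℝ → B →L[ℝ] B) (U : ℝ → ℝ → B →L[ℝ] B)
    (UnD : ℕ → ℝ → ℝ → D →L[ℝ] D) (UD : ℝ → ℝ → D →L[ℝ] D)
    (An : ℕ → ℝ → D →L[ℝ] B) (A : ℝ → D →L[ℝ] B)
    -- the propagators leave D invariant:
    (hcompatn : ∀ (n : ℕ) (t s : ℝ) (f : D), Un n t s (ι f) = ι (UnD n t s f))
    (hcompat : ∀ (t s : ℝ) (f : D), U t s (ι f) = ι (UD t s f))
    -- uniform bounds on B and on D:
    (hUnB : ∀ (n : ℕ) (t s : ℝ), t ≤ s → ‖Un n t s‖ ≤ C)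
    (hUB : ∀ t s : ℝ, t ≤ s → ‖U t s‖ ≤ C)
    (hUnDbd : ∀ (n : ℕ) (t s : ℝ), t ≤ s → ‖UnD n t s‖ ≤ C)
    (hUDbd : ∀ t s : ℝ, t ≤ s → ‖UD t s‖ ≤ C)
    -- propagator (chain rule) identities:
    (hidn : ∀ (n : ℕ) (t : ℝ), Un n t t = ContinuousLinearMap.id ℝ B)
    (hid : ∀ t : ℝ, U t t = ContinuousLinearMap.id ℝ B)
    (hchainn : ∀ (n : ℕ) (t s r : ℝ), t ≤ s → s ≤ r →
      (Un n t s).comp (Un n s r) = Un n t r)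
    (hchain : ∀ t s r : ℝ, t ≤ s → s ≤ r → (U t s).comp (U s r) = U t r)
    -- generation: forward derivative equations for Un, backward ones for U, on D:
    (hgen_fwd : ∀ (n : ℕ) (t : ℝ) (f : D) (s : ℝ), t ≤ s →
      HasDerivAt (fun u : ℝ => Un n t u (ι f)) (Un n t s (An n s f)) s)
    (hgen_bwd : ∀ (r : ℝ) (f : D) (s : ℝ), s ≤ r →
      HasDerivAt (fun u : ℝ => U u r (ι f)) (-(A s (UD s r f))) s)
    (hdense : DenseRange ι)
    (hint : ∀ (n : ℕ) (t r : ℝ) (g : D), IntervalIntegrable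
      (fun s : ℝ => Un n t s ((An n s - A s) (UD s r g))) MeasureTheory.volume t r)
    -- pointwise strong convergence of the generators, uniform generator bounds:
    (hAconv : ∀ (t : ℝ) (f : D),
      Filter.Tendsto (fun n : ℕ => An n t f) Filter.atTop (nhds (A t f)))
    (hAbd : ∃ M : ℝ, ∀ (n : ℕ) (t : ℝ), ‖An n t‖ ≤ M)
    (t r : ℝ) (htr : t ≤ r) :
    ∀ f : B, Filter.Tendsto (fun n : ℕ => Un n t r f) Filter.atTop (nhds (U t r f)) := by
  obtain ⟨M, hM⟩ := hAbd
  have hM0 : (0:ℝ) ≤ M := le_trans (norm_nonneg _) (hM 0 0)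
  have hA : ∀ s : ℝ, ‖A s‖ ≤ M := by
    intro s
    refine ContinuousLinearMap.opNorm_le_bound _ hM0 fun g => ?_
    refine le_of_tendsto (hAconv s g).norm (Filter.Eventually.of_forall fun n => ?_)
    exact ((An n s).le_opNorm g).trans (mul_le_mul_of_nonneg_right (hM n s) (norm_nonneg g))
  have key : ∀ g : D, Tendsto (fun n => Un n t r (ι g)) atTop (nhds (U t r (ι g))) := by
    intro g
    -- the integral identity
    have hident : ∀ n : ℕ, (∫ s in t..r, Un n t s ((An n s - A s) (UD s r g)))
        = Un n t r (ι g) - U t r (ι g) := by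
      intro n
      have hcontF : ContinuousOn (fun u => Un n t u (U u r (ι g))) (Set.Icc t r) := by
        intro s hs
        have hbd : ∀ᶠ u in nhdsWithin s (Set.Icc t r), ‖Un n t u‖ ≤ C := by
          filter_upwards [self_mem_nhdsWithin] with u hu
          exact hUnB n t u hu.1
        have hw : Tendsto (fun u => U u r (ι g)) (nhdsWithin s (Set.Icc t r))
            (nhds (U s r (ι g))) :=
          ((hgen_bwd r g s hs.2).continuousAt.tendsto).mono_left nhdsWithin_le_nhds
        have hTw : Tendsto (fun u => Un n t u (U s r (ι g))) (nhdsWithin s (Set.Icc t r))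
            (nhds (Un n t s (U s r (ι g)))) := by
          rw [hcompat s r g]
          exact ((hgen_fwd n t (UD s r g) s hs.1).continuousAt.tendsto).mono_left
            nhdsWithin_le_nhds
        exact tendsto_apply_aux' hbd hw hTw
      have hderiv : ∀ s ∈ Set.Ioo t r, HasDerivWithinAt (fun u => Un n t u (U u r (ι g)))
          (Un n t s ((An n s - A s) (UD s r g))) (Set.Ioi s) s := by
        intro s hs
        set f₀ := UD s r g with hf₀
        have hvs : U s r (ι g) = ι f₀ := hcompat s r g
        have hG : HasDerivAt (fun u => Un n t u (ι f₀)) (Un n t s (An n s f₀)) s :=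
          hgen_fwd n t f₀ s hs.1.le
        have hstrong : ∀ w : B, Tendsto (fun u => Un n t u w) (nhdsWithin s (Set.Ioi s))
            (nhds (Un n t s w)) := by
          intro w
          refine tendsto_dense_aux' ι hdense ?_ (hUnB n t s hs.1.le) (fun h => ?_) w
          · filter_upwards [self_mem_nhdsWithin] with u hu
            exact hUnB n t u (hs.1.le.trans hu.le)
          · exact ((hgen_fwd n t h s hs.1.le).continuousAt.tendsto).mono_left nhdsWithin_le_nhds
        have hvslope : Tendsto (slope (fun u => U u r (ι g)) s)
            (nhdsWithin s (Set.Ioi s \ {s})) (nhds (-(A s f₀))) :=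
          (hasDerivAt_iff_tendsto_slope.mp (hgen_bwd r g s hs.2.le)).mono_left
            (nhdsWithin_mono s fun x hx => hx.2)
        have hH : HasDerivWithinAt (fun u => Un n t u (U u r (ι g) - ι f₀))
            (Un n t s (-(A s f₀))) (Set.Ioi s) s := by
          rw [hasDerivWithinAt_iff_tendsto_slope]
          have heq : slope (fun u => Un n t u (U u r (ι g) - ι f₀)) s
              = fun u => Un n t u (slope (fun u => U u r (ι g)) s u) := by
            funext u
            rw [slope_def_module, slope_def_module, hvs, sub_self, map_zero, sub_zero, _root_.map_smul]
          rw [heq]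
          refine tendsto_apply_aux' (C := C) ?_ hvslope
            ((hstrong (-(A s f₀))).mono_left (nhdsWithin_mono s Set.diff_subset))
          filter_upwards [self_mem_nhdsWithin] with u hu
          exact hUnB n t u (hs.1.le.trans hu.1.le)
        have hsum := hG.hasDerivWithinAt.add hH
        have hfun : (fun u => Un n t u (ι f₀) + Un n t u (U u r (ι g) - ι f₀))
            = fun u => Un n t u (U u r (ι g)) := by
          funext u; rw [← map_add]; congr 1; abel
        have hval : Un n t s (An n s f₀) + Un n t s (-(A s f₀))
            = Un n t s ((An n s - A s) f₀) := by
          rw [← map_add]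
          congr 1
          simp [ContinuousLinearMap.sub_apply, sub_eq_add_neg]
        rw [show ((fun u => Un n t u (ι f₀)) + fun u => Un n t u (U u r (ι g) - ι f₀))
            = fun u => Un n t u (ι f₀) + Un n t u (U u r (ι g) - ι f₀) from rfl, hfun, hval] at hsum
        exact hsum
      have hFTC := intervalIntegral.integral_eq_sub_of_hasDeriv_right_of_le htr hcontF hderiv
        (hint n t r g)
      rw [hFTC, hid r, hidn n t]
      simp
    -- dominated convergence
    have hDCT : Tendsto (fun n => ∫ s in t..r, Un n t s ((An n s - A s) (UD s r g)))
        atTop (nhds 0) := by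
      have h0 : (0 : B) = ∫ _ in t..r, (0 : B) := by simp
      rw [h0]
      refine intervalIntegral.tendsto_integral_filter_of_dominated_convergence
        (bound := fun _ => C * ((M + M) * (C * ‖g‖))) ?_ ?_ intervalIntegrable_const ?_
      · filter_upwards with n
        have := (hint n t r g).1.aestronglyMeasurable
        rwa [Set.uIoc_of_le htr]
      · filter_upwards with n
        filter_upwards with s hs
        rw [Set.uIoc_of_le htr] at hs
        have hts : t ≤ s := hs.1.le
        have h1 : ‖Un n t s ((An n s - A s) (UD s r g))‖ ≤ C * ‖(An n s - A s) (UD s r g)‖ :=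
          le_trans ((Un n t s).le_opNorm _)
            (mul_le_mul_of_nonneg_right (hUnB n t s hts) (norm_nonneg _))
        have h2 : ‖(An n s - A s) (UD s r g)‖ ≤ (M + M) * ‖UD s r g‖ := by
          refine le_trans ((An n s - A s).le_opNorm _) (mul_le_mul_of_nonneg_right ?_
            (norm_nonneg _))
          exact le_trans (norm_sub_le _ _) (add_le_add (hM n s) (hA s))
        have h3 : ‖UD s r g‖ ≤ C * ‖g‖ :=
          le_trans ((UD s r).le_opNorm _)
            (mul_le_mul_of_nonneg_right (hUDbd s r hs.2) (norm_nonneg _))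
        calc ‖Un n t s ((An n s - A s) (UD s r g))‖
            ≤ C * ‖(An n s - A s) (UD s r g)‖ := h1
          _ ≤ C * ((M + M) * ‖UD s r g‖) := by
              exact mul_le_mul_of_nonneg_left h2 hC
          _ ≤ C * ((M + M) * (C * ‖g‖)) := by
              refine mul_le_mul_of_nonneg_left (mul_le_mul_of_nonneg_left h3 (by linarith)) hC
      · filter_upwards with s hs
        rw [Set.uIoc_of_le htr] at hs
        apply squeeze_zero_norm' (a := fun n => C * ‖An n s (UD s r g) - A s (UD s r g)‖)
        · filter_upwards with n
          refine le_trans ((Un n t s).le_opNorm _) ?_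
          rw [ContinuousLinearMap.sub_apply]
          exact mul_le_mul_of_nonneg_right (hUnB n t s hs.1.le) (norm_nonneg _)
        · have hd : Tendsto (fun n => An n s (UD s r g) - A s (UD s r g)) atTop (nhds 0) := by
            simpa using (hAconv s (UD s r g)).sub (tendsto_const_nhds (x := A s (UD s r g)))
          have := (tendsto_zero_iff_norm_tendsto_zero.mp hd).const_mul C
          simpa using this
    have h2 : Tendsto (fun n => Un n t r (ι g) - U t r (ι g)) atTop (nhds 0) := by
      simpa only [hident] using hDCT
    have h3 := h2.add (tendsto_const_nhds (x := U t r (ι g)))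
    simpa using h3
  exact tendsto_dense_aux' ι hdense (Filter.Eventually.of_forall fun n => hUnB n t r htr)
    (hUB t r htr) key
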